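/- For t > 0, x ≥ 0, and α ∈ (0,1), the total mass of the measure P_x(B_t^{(α)} ∈ dy, ℓ_t^{(α)} ∈ dℓ) given by the corrected formula equals 1; that is, ∫₀^∞∫_{-∞}^0 2(1-α)(ℓ-y+x)/√(2πt³) e^{-(ℓ-y+x)²/(2t)} dy dℓ + ∫₀^∞∫₀^∞ 2α(ℓ+y+x)/√(2πt³) e^{-(ℓ+y+x)²/(2t)} dy dℓ + ∫₀^∞ (1/√(2πt))[e^{-(y-x)²/(2t)} - e^{-(y+x)²/(2t)}] dy = 1. -/

import Mathlib

open Real MeasureTheory Filter Set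

/-- Integrability of the Gaussian `exp (-u^2/(2t))`. -/
lemma gauss_integrable {t : ℝ} (ht : 0 < t) :
    Integrable (fun u : ℝ => Real.exp (-u ^ 2 / (2 * t))) := by
  have h := integrable_exp_neg_mul_sq (b := (2 * t)⁻¹) (by positivity)
  refine h.congr ?_
  filter_upwards with u
  ring_nf

/-- Integrability of `u * exp (-u^2/(2t))`. -/
lemma gauss_mul_integrable {t : ℝ} (ht : 0 < t) :
    Integrable (fun u : ℝ => u * Real.exp (-u ^ 2 / (2 * t))) := by
  have h := integrable_mul_exp_neg_mul_sq (b := (2 * t)⁻¹) (by positivity)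
  refine h.congr ?_
  filter_upwards with u
  ring_nf

/-- Tail integral of `(c + y) * exp (-(c+y)^2/(2t))` over `Ioi 0`. -/
lemma tail_integral {t : ℝ} (ht : 0 < t) (c : ℝ) :
    ∫ y in Ioi (0:ℝ), (c + y) * Real.exp (-(c + y) ^ 2 / (2 * t))
      = t * Real.exp (-c ^ 2 / (2 * t)) := by
  have ht' : t ≠ 0 := ht.ne'
  have hderiv : ∀ y ∈ Ici (0:ℝ),
      HasDerivAt (fun y : ℝ => -t * Real.exp (-(c + y) ^ 2 / (2 * t)))
        ((c + y) * Real.exp (-(c + y) ^ 2 / (2 * t))) y := by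
    intro y _
    have h1 : HasDerivAt (fun y : ℝ => -(c + y) ^ 2 / (2 * t)) (-(c + y) / t) y := by
      have : HasDerivAt (fun y : ℝ => (c + y)) 1 y :=
        (hasDerivAt_id y).const_add c
      have h2 := (this.pow 2).neg.div_const (2 * t)
      refine h2.congr_deriv ?_
      field_simp
      ring
    have h3 := h1.exp.const_mul (-t)
    refine h3.congr_deriv ?_
    field_simp
  have hint : IntegrableOn (fun y : ℝ => (c + y) * Real.exp (-(c + y) ^ 2 / (2 * t)))
      (Ioi (0:ℝ)) := by
    have h := ((gauss_mul_integrable ht).comp_add_right c).integrableOn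
      (s := Ioi (0:ℝ))
    refine h.congr_fun ?_ measurableSet_Ioi
    intro y _
    simp only
    ring_nf
  have htend : Tendsto (fun y : ℝ => -t * Real.exp (-(c + y) ^ 2 / (2 * t)))
      atTop (nhds 0) := by
    have h1 : Tendsto (fun y : ℝ => -(c + y) ^ 2 / (2 * t)) atTop atBot := by
      apply Tendsto.atBot_div_const (by positivity)
      apply tendsto_neg_atBot_iff.mpr
      have hc : Tendsto (fun y : ℝ => c + y) atTop atTop :=
        tendsto_atTop_add_const_left _ c tendsto_id
      exact (tendsto_pow_atTop (n := 2) two_ne_zero).comp hc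
    have h2 := (Real.tendsto_exp_atBot.comp h1).const_mul (-t)
    simpa using h2
  have := integral_Ioi_of_hasDerivAt_of_tendsto'
    (f := fun y : ℝ => -t * Real.exp (-(c + y) ^ 2 / (2 * t)))
    (f' := fun y : ℝ => (c + y) * Real.exp (-(c + y) ^ 2 / (2 * t)))
    hderiv hint htend
  rw [this]
  ring_nf

theorem stmt4 (t x α : ℝ) (ht : 0 < t) (hx : 0 ≤ x) (hα : α ∈ Set.Ioo (0:ℝ) 1) :
    (∫ ℓ in Set.Ioi (0:ℝ), ∫ y in Set.Iic (0:ℝ),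
        2 * (1 - α) * (ℓ - y + x) / Real.sqrt (2 * π * t ^ 3) *
          Real.exp (-(ℓ - y + x) ^ 2 / (2 * t)))
      + (∫ ℓ in Set.Ioi (0:ℝ), ∫ y in Set.Ioi (0:ℝ),
          2 * α * (ℓ + y + x) / Real.sqrt (2 * π * t ^ 3) *
            Real.exp (-(ℓ + y + x) ^ 2 / (2 * t)))
      + (∫ y in Set.Ioi (0:ℝ),
          (1 / Real.sqrt (2 * π * t)) *
            (Real.exp (-(y - x) ^ 2 / (2 * t)) - Real.exp (-(y + x) ^ 2 / (2 * t))))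
      = 1 := by
  have ht' : t ≠ 0 := ht.ne'
  have hπ : (0:ℝ) < π := Real.pi_pos
  -- the common constants
  set S := Real.sqrt (2 * π * t) with hS
  have hSpos : 0 < S := Real.sqrt_pos.mpr (by positivity)
  have hS3 : Real.sqrt (2 * π * t ^ 3) = t * S := by
    rw [hS, show (2:ℝ) * π * t ^ 3 = t ^ 2 * (2 * π * t) by ring,
      Real.sqrt_mul (by positivity), Real.sqrt_sq ht.le]
  -- important tail integrals
  set A := ∫ ℓ in Set.Ioi (0:ℝ), Real.exp (-(ℓ + x) ^ 2 / (2 * t)) with hA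
  set B := ∫ y in Set.Ioi (0:ℝ), Real.exp (-(y - x) ^ 2 / (2 * t)) with hB
  -- A + B = S
  have hAB : A + B = S := by
    have hInt : Integrable (fun u : ℝ => Real.exp (-(u + x) ^ 2 / (2 * t))) :=
      (gauss_integrable ht).comp_add_right x
    have hBeq : B = ∫ u in Set.Iic (0:ℝ), Real.exp (-(u + x) ^ 2 / (2 * t)) := by
      rw [hB]
      have := integral_comp_neg_Ioi (0:ℝ)
        (fun u : ℝ => Real.exp (-(u + x) ^ 2 / (2 * t)))
      rw [neg_zero] at this
      rw [← this]
      refine setIntegral_congr_fun measurableSet_Ioi (fun y _ => ?_)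
      ring_nf
    rw [hBeq, hA, add_comm, intervalIntegral.integral_Iic_add_Ioi hInt.integrableOn hInt.integrableOn]
    have h1 : ∫ u : ℝ, Real.exp (-(u + x) ^ 2 / (2 * t))
        = ∫ u : ℝ, Real.exp (-u ^ 2 / (2 * t)) := by
      exact integral_add_right_eq_self (fun u : ℝ => Real.exp (-u ^ 2 / (2 * t))) x
    rw [h1]
    have h2 : ∫ u : ℝ, Real.exp (-u ^ 2 / (2 * t))
        = ∫ u : ℝ, Real.exp (-(2 * t)⁻¹ * u ^ 2) := by
      congr 1; funext u; ring_nf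
    rw [h2, integral_gaussian, hS]
    congr 1
    field_simp
  -- first double integral
  have inner1 : ∀ ℓ : ℝ,
      (∫ y in Set.Iic (0:ℝ), 2 * (1 - α) * (ℓ - y + x) / Real.sqrt (2 * π * t ^ 3) *
        Real.exp (-(ℓ - y + x) ^ 2 / (2 * t)))
      = 2 * (1 - α) / S * Real.exp (-(ℓ + x) ^ 2 / (2 * t)) := by
    intro ℓ
    have step : (∫ y in Set.Iic (0:ℝ), 2 * (1 - α) * (ℓ - y + x) / Real.sqrt (2 * π * t ^ 3) *
        Real.exp (-(ℓ - y + x) ^ 2 / (2 * t)))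
        = 2 * (1 - α) / (t * S) * ∫ y in Set.Iic (0:ℝ),
            (ℓ - y + x) * Real.exp (-(ℓ - y + x) ^ 2 / (2 * t)) := by
      rw [← integral_const_mul, hS3]
      refine setIntegral_congr_fun measurableSet_Iic (fun y _ => ?_)
      ring
    rw [step]
    have subst : (∫ y in Set.Iic (0:ℝ),
        (ℓ - y + x) * Real.exp (-(ℓ - y + x) ^ 2 / (2 * t)))
        = ∫ y in Set.Ioi (0:ℝ), ((ℓ + x) + y) * Real.exp (-((ℓ + x) + y) ^ 2 / (2 * t)) := by
      have := integral_comp_neg_Iic (0:ℝ)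
        (fun y : ℝ => ((ℓ + x) + y) * Real.exp (-((ℓ + x) + y) ^ 2 / (2 * t)))
      rw [neg_zero] at this
      rw [← this]
      refine setIntegral_congr_fun measurableSet_Iic (fun y _ => ?_)
      ring_nf
    rw [subst, tail_integral ht (ℓ + x)]
    field_simp
  have inner2 : ∀ ℓ : ℝ,
      (∫ y in Set.Ioi (0:ℝ), 2 * α * (ℓ + y + x) / Real.sqrt (2 * π * t ^ 3) *
        Real.exp (-(ℓ + y + x) ^ 2 / (2 * t)))
      = 2 * α / S * Real.exp (-(ℓ + x) ^ 2 / (2 * t)) := by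
    intro ℓ
    have step : (∫ y in Set.Ioi (0:ℝ), 2 * α * (ℓ + y + x) / Real.sqrt (2 * π * t ^ 3) *
        Real.exp (-(ℓ + y + x) ^ 2 / (2 * t)))
        = 2 * α / (t * S) * ∫ y in Set.Ioi (0:ℝ),
            ((ℓ + x) + y) * Real.exp (-((ℓ + x) + y) ^ 2 / (2 * t)) := by
      rw [← integral_const_mul, hS3]
      refine setIntegral_congr_fun measurableSet_Ioi (fun y _ => ?_)
      ring_nf
    rw [step, tail_integral ht (ℓ + x)]
    field_simp
  -- rewrite the double integrals
  have term1 : (∫ ℓ in Set.Ioi (0:ℝ), ∫ y in Set.Iic (0:ℝ),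
      2 * (1 - α) * (ℓ - y + x) / Real.sqrt (2 * π * t ^ 3) *
        Real.exp (-(ℓ - y + x) ^ 2 / (2 * t)))
      = 2 * (1 - α) / S * A := by
    rw [hA, ← integral_const_mul]
    exact setIntegral_congr_fun measurableSet_Ioi (fun ℓ _ => inner1 ℓ)
  have term2 : (∫ ℓ in Set.Ioi (0:ℝ), ∫ y in Set.Ioi (0:ℝ),
      2 * α * (ℓ + y + x) / Real.sqrt (2 * π * t ^ 3) *
        Real.exp (-(ℓ + y + x) ^ 2 / (2 * t)))
      = 2 * α / S * A := by
    rw [hA, ← integral_const_mul]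
    exact setIntegral_congr_fun measurableSet_Ioi (fun ℓ _ => inner2 ℓ)
  -- third term
  have hIntB : IntegrableOn (fun y : ℝ => Real.exp (-(y - x) ^ 2 / (2 * t)))
      (Set.Ioi (0:ℝ)) := ((gauss_integrable ht).comp_sub_right x).integrableOn
  have hIntA : IntegrableOn (fun y : ℝ => Real.exp (-(y + x) ^ 2 / (2 * t)))
      (Set.Ioi (0:ℝ)) := ((gauss_integrable ht).comp_add_right x).integrableOn
  have term3 : (∫ y in Set.Ioi (0:ℝ),
      (1 / Real.sqrt (2 * π * t)) *
        (Real.exp (-(y - x) ^ 2 / (2 * t)) - Real.exp (-(y + x) ^ 2 / (2 * t))))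
      = 1 / S * (B - A) := by
    rw [← hS, integral_const_mul, integral_sub hIntB hIntA, hB, hA]
  rw [term1, term2, term3]
  field_simp
  linarith [hAB]
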